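/- For any homogeneous polynomial Q on ℂᵏ and distinct variables λ₁,...,λ_n (k ≤ n), the fixed-point sum Σ_{σ} Q(λ_{σ(1)},...,λ_{σ(k)}) / ∏_{m=1}^{k} ∏_{i=m+1}^{n} (λ_{σ(i)} − λ_{σ(m)}), where σ runs over ordered k-element subsets (injections {1,...,k} → {1,...,n} extended to permutations of {1,...,n} modulo permutations of the last n−k elements), equals the iterated residue at infinity Res_{𝐳=∞} [∏_{1≤m<l≤k}(z_m − z_l) · Q(𝐳) · d𝐳] / [∏_{l=1}^{k} ∏_{i=1}^{n} (λ_i − z_l)]. -/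

import Mathlib

noncomputable section

/-- Iterated circle integral `∮_{|z₁|=R₁} ⋯ ∮_{|z_k|=R_k} f(z) dz_k ⋯ dz₁`. -/
def itCircleIntegral : (k : ℕ) → ((Fin k → ℂ) → ℂ) → (Fin k → ℝ) → ℂ
  | 0, f, _ => f (fun i => i.elim0)
  | k + 1, f, R =>
      ∮ z in C((0 : ℂ), R 0),
        itCircleIntegral k (fun w => f (Fin.cons z w)) (fun i => R i.succ)

/-- Admissibility of radii: `1 ≪ R₁ ≪ ⋯ ≪ R_k`, encoded via a threshold function `F`. -/
def AdmRadii (k : ℕ) (F : ℝ → ℝ) (R : Fin k → ℝ) : Prop :=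
  (∀ h : 0 < k, F 1 < R ⟨0, h⟩) ∧
    ∀ i : Fin k, ∀ h : i.1 + 1 < k, F (R i) < R ⟨i.1 + 1, h⟩

open scoped Classical


open Finset Metric

section Helpers

lemma circleIntegral_finset_sum {ι : Type*} (s : Finset ι) (f : ι → ℂ → ℂ) (c : ℂ) (R : ℝ)
    (h : ∀ i ∈ s, CircleIntegrable (f i) c R) :
    (∮ z in C(c, R), ∑ i ∈ s, f i z) = ∑ i ∈ s, ∮ z in C(c, R), f i z := by
  simp only [circleIntegral, smul_sum]
  rw [intervalIntegral.integral_finset_sum]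
  exact fun i hi => (h i hi).out

lemma circleIntegral_add' {f g : ℂ → ℂ} {c : ℂ} {R : ℝ} (hf : CircleIntegrable f c R)
    (hg : CircleIntegrable g c R) :
    (∮ z in C(c, R), (f z + g z)) = (∮ z in C(c, R), f z) + ∮ z in C(c, R), g z := by
  simp only [circleIntegral, smul_add]
  exact intervalIntegral.integral_add hf.out hg.out

lemma prod_neg'' {ι : Type*} (s : Finset ι) (f : ι → ℂ) :
    (∏ i ∈ s, (-(f i))) = (-1) ^ s.card * ∏ i ∈ s, f i := by
  calc (∏ i ∈ s, (-(f i))) = ∏ i ∈ s, ((-1) * f i) := by simp [neg_one_mul]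
  _ = (∏ _i ∈ s, (-1 : ℂ)) * ∏ i ∈ s, f i := prod_mul_distrib
  _ = (-1) ^ s.card * ∏ i ∈ s, f i := by rw [prod_const]

lemma prod_X_sub_C_dvd' {ι : Type*} (s : Finset ι) (lam : ι → ℂ)
    (hinj : ∀ i ∈ s, ∀ j ∈ s, lam i = lam j → i = j)
    (p : Polynomial ℂ) (hroot : ∀ i ∈ s, p.eval (lam i) = 0) :
    (∏ i ∈ s, (Polynomial.X - Polynomial.C (lam i))) ∣ p := by
  induction s using Finset.induction_on generalizing p with
  | empty => simp
  | insert a s' ha ih =>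
    have h1 : (Polynomial.X - Polynomial.C (lam a)) ∣ p :=
      Polynomial.dvd_iff_isRoot.2 (hroot a (mem_insert_self a s'))
    obtain ⟨q, rfl⟩ := h1
    rw [prod_insert ha]
    refine mul_dvd_mul_left _ (ih ?_ q ?_)
    · exact fun i hi j hj hij => hinj i (mem_insert_of_mem hi) j (mem_insert_of_mem hj) hij
    · intro i hi
      have hne : lam i - lam a ≠ 0 := by
        refine sub_ne_zero.2 fun h => ha ?_
        have := hinj i (mem_insert_of_mem hi) a (mem_insert_self a s') h
        rwa [← this]
      have := hroot i (mem_insert_of_mem hi)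
      simp only [Polynomial.eval_mul, Polynomial.eval_sub, Polynomial.eval_X,
        Polynomial.eval_C] at this
      exact (mul_eq_zero.1 this).resolve_left hne

end Helpers

section PF

variable {n : ℕ}

lemma partial_fractions (lam : Fin n → ℂ) (hlam : Function.Injective lam)
    (P : Polynomial ℂ) :
    ∃ S : Polynomial ℂ, ∀ z : ℂ, (∀ i, z ≠ lam i) →
      P.eval z * (∏ i, (lam i - z))⁻¹ =
        (-1 : ℂ) ^ n * (S.eval z +
          ∑ i, (P.eval (lam i) * (∏ j ∈ Finset.univ.erase i, (lam i - lam j))⁻¹) *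
            (z - lam i)⁻¹) := by
  set c : Fin n → ℂ := fun i =>
    P.eval (lam i) * (∏ j ∈ Finset.univ.erase i, (lam i - lam j))⁻¹ with hc
  set L : Polynomial ℂ := ∑ i, Polynomial.C (c i) *
    ∏ j ∈ Finset.univ.erase i, (Polynomial.X - Polynomial.C (lam j)) with hL
  have hEne : ∀ i : Fin n, (∏ j ∈ Finset.univ.erase i, (lam i - lam j)) ≠ 0 := by
    intro i
    rw [prod_ne_zero_iff]
    intro j hj
    exact sub_ne_zero.2 fun h => (Finset.mem_erase.1 hj).1 (hlam h.symm)
  have hLeval : ∀ i : Fin n, L.eval (lam i) = P.eval (lam i) := by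
    intro i
    rw [hL, Polynomial.eval_finset_sum]
    rw [Finset.sum_eq_single i]
    · simp only [Polynomial.eval_mul, Polynomial.eval_C, Polynomial.eval_prod,
        Polynomial.eval_sub, Polynomial.eval_X]
      rw [hc, mul_assoc, inv_mul_cancel₀ (hEne i), mul_one]
    · intro b _ hbi
      have hib : i ∈ Finset.univ.erase b := Finset.mem_erase.2 ⟨fun h => hbi h.symm, Finset.mem_univ i⟩
      simp only [Polynomial.eval_mul, Polynomial.eval_C, Polynomial.eval_prod,
        Polynomial.eval_sub, Polynomial.eval_X]
      rw [Finset.prod_eq_zero hib (by ring), mul_zero]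
    · intro h; exact absurd (Finset.mem_univ i) h
  have hdvd : (∏ i, (Polynomial.X - Polynomial.C (lam i))) ∣ (P - L) := by
    refine prod_X_sub_C_dvd' Finset.univ lam (fun i _ j _ h => hlam h) _ fun i _ => ?_
    simp [hLeval i]
  obtain ⟨S, hS⟩ := hdvd
  refine ⟨S, fun z hz => ?_⟩
  have hD : ∀ i : Fin n, z - lam i ≠ 0 := fun i => sub_ne_zero.2 (hz i)
  have hDz : (∏ i, (z - lam i)) ≠ 0 := prod_ne_zero_iff.2 fun i _ => hD i
  have hPz : P.eval z = L.eval z + (∏ i, (z - lam i)) * S.eval z := by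
    have := congrArg (Polynomial.eval z) hS
    simp only [Polynomial.eval_sub, Polynomial.eval_mul, Polynomial.eval_prod,
      Polynomial.eval_X, Polynomial.eval_C] at this
    linear_combination this
  have hsign : (∏ i, (lam i - z)) = (-1 : ℂ) ^ n * ∏ i, (z - lam i) := by
    calc (∏ i, (lam i - z)) = ∏ i, (-(z - lam i)) := by
          exact Finset.prod_congr rfl fun i _ => by ring
    _ = (-1 : ℂ) ^ (Finset.univ : Finset (Fin n)).card * ∏ i, (z - lam i) :=
          prod_neg'' _ _
    _ = (-1 : ℂ) ^ n * ∏ i, (z - lam i) := by rw [Finset.card_univ, Fintype.card_fin]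
  have key : P.eval z * (∏ i, (z - lam i))⁻¹ =
      S.eval z + ∑ i, c i * (z - lam i)⁻¹ := by
    have hmul : (S.eval z + ∑ i, c i * (z - lam i)⁻¹) * (∏ i, (z - lam i)) = P.eval z := by
      rw [add_mul, Finset.sum_mul]
      have hterm : ∀ i : Fin n, c i * (z - lam i)⁻¹ * (∏ j, (z - lam j))
          = c i * ∏ j ∈ Finset.univ.erase i, (z - lam j) := by
        intro i
        rw [← Finset.mul_prod_erase Finset.univ _ (Finset.mem_univ i)]
        rw [mul_assoc, ← mul_assoc ((z - lam i)⁻¹), inv_mul_cancel₀ (hD i), one_mul]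
      rw [Finset.sum_congr rfl fun i _ => hterm i]
      have hLz : L.eval z = ∑ i, c i * ∏ j ∈ Finset.univ.erase i, (z - lam j) := by
        rw [hL, Polynomial.eval_finset_sum]
        exact Finset.sum_congr rfl fun i _ => by
          simp [Polynomial.eval_prod]
      rw [← hLz, hPz]; ring
    calc P.eval z * (∏ i, (z - lam i))⁻¹
        = ((S.eval z + ∑ i, c i * (z - lam i)⁻¹) * (∏ i, (z - lam i))) *
            (∏ i, (z - lam i))⁻¹ := by rw [hmul]
    _ = _ := by rw [mul_assoc, mul_inv_cancel₀ hDz, mul_one]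
  rw [hsign, mul_inv, ← mul_assoc, mul_comm (P.eval z), mul_assoc]
  rw [key]
  congr 1
  rw [show ((-1 : ℂ) ^ n)⁻¹ = ((-1 : ℂ)⁻¹) ^ n from (inv_pow _ _).symm, inv_neg, inv_one]

end PF

section Single

variable {n : ℕ}

lemma single_integral (lam : Fin n → ℂ) (hlam : Function.Injective lam)
    (P : Polynomial ℂ) {R : ℝ} (hR : 0 < R) (hlt : ∀ i, ‖lam i‖ < R) :
    (∮ z in C((0 : ℂ), R), P.eval z * (∏ i, (lam i - z))⁻¹) =
      (-(2 * (Real.pi : ℂ) * Complex.I)) *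
        ∑ i, P.eval (lam i) * (∏ j ∈ Finset.univ.erase i, (lam j - lam i))⁻¹ := by
  obtain ⟨S, hS⟩ := partial_fractions lam hlam P
  set c : Fin n → ℂ := fun i =>
    P.eval (lam i) * (∏ j ∈ Finset.univ.erase i, (lam i - lam j))⁻¹ with hc
  have hsph : ∀ z ∈ sphere (0 : ℂ) R, ∀ i, z ≠ lam i := by
    intro z hz i h
    rw [mem_sphere_zero_iff_norm] at hz
    rw [h] at hz
    exact absurd hz (ne_of_gt (by simpa using hlt i)).symm
  have hcong : (∮ z in C((0 : ℂ), R), P.eval z * (∏ i, (lam i - z))⁻¹) =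
      ∮ z in C((0 : ℂ), R),
        ((-1 : ℂ) ^ n * (S.eval z + ∑ i, c i * (z - lam i)⁻¹)) :=
    circleIntegral.integral_congr hR.le fun z hz => hS z (hsph z hz)
  rw [hcong, circleIntegral.integral_const_mul]
  have hSint : CircleIntegrable (fun z => S.eval z) 0 R :=
    (S.differentiable.continuous.continuousOn).circleIntegrable hR.le
  have hSum_cont : ∀ i : Fin n, ContinuousOn (fun z : ℂ => c i * (z - lam i)⁻¹)
      (sphere (0 : ℂ) R) := by
    intro i
    refine continuousOn_const.mul (ContinuousOn.inv₀ ((continuous_id.sub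
      continuous_const).continuousOn) fun z hz => sub_ne_zero.2 (hsph z hz i))
  have hSumInt : CircleIntegrable (fun z => ∑ i, c i * (z - lam i)⁻¹) 0 R :=
    ((continuousOn_finset_sum Finset.univ) fun i _ => hSum_cont i).circleIntegrable hR.le
  rw [circleIntegral_add' hSint hSumInt]
  have hSzero : (∮ z in C((0 : ℂ), R), S.eval z) = 0 := by
    refine Complex.circleIntegral_eq_zero_of_differentiable_on_off_countable hR.le
      Set.countable_empty (S.differentiable.continuous.continuousOn) fun z _ =>
        S.differentiable.differentiableAt
  have hSumval : (∮ z in C((0 : ℂ), R), ∑ i, c i * (z - lam i)⁻¹)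
      = ∑ i, c i * (2 * (Real.pi : ℂ) * Complex.I) := by
    rw [circleIntegral_finset_sum Finset.univ (fun i z => c i * (z - lam i)⁻¹) 0 R
      (fun i _ => (hSum_cont i).circleIntegrable hR.le)]
    refine Finset.sum_congr rfl fun i _ => ?_
    rw [circleIntegral.integral_const_mul,
      circleIntegral.integral_sub_inv_of_mem_ball (by
        rw [mem_ball_zero_iff]; simpa using hlt i)]
  rw [hSzero, hSumval, zero_add, Finset.mul_sum, Finset.mul_sum]
  refine Finset.sum_congr rfl fun i _ => ?_
  have hn1 : (Finset.univ.erase i).card = n - 1 := by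
    rw [Finset.card_erase_of_mem (Finset.mem_univ i), Finset.card_univ, Fintype.card_fin]
  have hnpos : 1 ≤ n := Nat.one_le_iff_ne_zero.2 fun h => by subst h; exact i.elim0
  have hprod : (∏ j ∈ Finset.univ.erase i, (lam i - lam j))
      = (-1 : ℂ) ^ (n - 1) * ∏ j ∈ Finset.univ.erase i, (lam j - lam i) := by
    calc (∏ j ∈ Finset.univ.erase i, (lam i - lam j))
        = ∏ j ∈ Finset.univ.erase i, (-(lam j - lam i)) :=
          Finset.prod_congr rfl fun j _ => by ring
    _ = _ := by rw [prod_neg'', hn1]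
  rw [hc]
  simp only []
  rw [hprod, mul_inv]
  rw [show (((-1 : ℂ) ^ (n - 1))⁻¹) = ((-1 : ℂ)⁻¹) ^ (n - 1) from (inv_pow _ _).symm,
    inv_neg, inv_one]
  have hsgn : (-1 : ℂ) ^ n * (-1 : ℂ) ^ (n - 1) = -1 := by
    rw [← pow_add]
    have : n + (n - 1) = 2 * (n - 1) + 1 := by omega
    rw [this, pow_succ, pow_mul]
    simp
  calc (-1 : ℂ) ^ n * (P.eval (lam i) * ((-1 : ℂ) ^ (n - 1) *
        (∏ j ∈ Finset.univ.erase i, (lam j - lam i))⁻¹) * (2 * (Real.pi : ℂ) * Complex.I))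
      = ((-1 : ℂ) ^ n * (-1 : ℂ) ^ (n - 1)) * (P.eval (lam i) *
        (∏ j ∈ Finset.univ.erase i, (lam j - lam i))⁻¹ * (2 * (Real.pi : ℂ) * Complex.I)) := by
        ring
  _ = _ := by rw [hsgn]; ring

end Single

section Iter

lemma itCI_sum_sep {ι : Type*} (s : Finset ι) (k : ℕ) :
    ∀ (c : ι → ℂ) (g : ι → Fin k → ℂ → ℂ) (R : Fin k → ℝ),
      (∀ l, 0 < R l) → (∀ i ∈ s, ∀ l, ContinuousOn (g i l) (sphere (0 : ℂ) (R l))) →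
      itCircleIntegral k (fun z => ∑ i ∈ s, c i * ∏ l, g i l (z l)) R
        = ∑ i ∈ s, c i * ∏ l, ∮ z in C((0 : ℂ), R l), g i l z := by
  induction k with
  | zero => intro c g R _ _; simp [itCircleIntegral]
  | succ k ih =>
    intro c g R hR hcont
    have hstep : itCircleIntegral (k + 1) (fun z => ∑ i ∈ s, c i * ∏ l, g i l (z l)) R
        = ∮ z in C((0 : ℂ), R 0), itCircleIntegral k
            (fun w => ∑ i ∈ s, c i * ∏ l : Fin (k + 1), g i l ((Fin.cons z w : Fin (k+1) → ℂ) l))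
            (fun i => R i.succ) := by rw [itCircleIntegral]
    rw [hstep]
    have inner : ∀ z : ℂ, itCircleIntegral k
        (fun w => ∑ i ∈ s, c i * ∏ l : Fin (k + 1), g i l ((Fin.cons z w : Fin (k+1) → ℂ) l))
        (fun i => R i.succ)
        = ∑ i ∈ s, (c i * ∏ l : Fin k, ∮ w in C((0 : ℂ), R l.succ), g i l.succ w)
            * g i 0 z := by
      intro z
      have h1 : (fun w : Fin k → ℂ => ∑ i ∈ s, c i * ∏ l : Fin (k + 1), g i l ((Fin.cons z w : Fin (k+1) → ℂ) l))
          = fun w => ∑ i ∈ s, (c i * g i 0 z) * ∏ l : Fin k, g i l.succ (w l) := by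
        funext w
        refine Finset.sum_congr rfl fun i _ => ?_
        rw [Fin.prod_univ_succ]
        simp only [Fin.cons_zero, Fin.cons_succ]
        ring
      rw [h1, ih (fun i => c i * g i 0 z) (fun i l => g i l.succ) (fun l => R l.succ)
        (fun l => hR l.succ) (fun i hi l => hcont i hi l.succ)]
      exact Finset.sum_congr rfl fun i _ => by ring
    simp only [inner]
    rw [circleIntegral_finset_sum s
      (fun i z => (c i * ∏ l : Fin k, ∮ w in C((0 : ℂ), R l.succ), g i l.succ w) * g i 0 z)
      0 (R 0)
      (fun i hi => (continuousOn_const.mul (hcont i hi 0)).circleIntegrable (hR 0).le)]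
    refine Finset.sum_congr rfl fun i _ => ?_
    rw [circleIntegral.integral_const_mul, Fin.prod_univ_succ]
    ring

end Iter

lemma cancel_aux (a w b : ℂ) (hb : b ≠ 0) : a / w = (b * a) * (b * w)⁻¹ := by
  rw [mul_inv, div_eq_mul_inv]
  calc a * w⁻¹ = (b * b⁻¹) * (a * w⁻¹) := by rw [mul_inv_cancel₀ hb, one_mul]
  _ = (b * a) * (b⁻¹ * w⁻¹) := by ring

lemma pair_prod (k : ℕ) (f : Fin k → Fin k → ℂ) :
    (∏ p ∈ Finset.univ.filter (fun p : Fin k × Fin k => p.1 < p.2), f p.1 p.2)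
      = ∏ m : Fin k, ∏ i ∈ Finset.univ.filter (fun i => i < m), f i m := by
  rw [Finset.prod_filter]
  rw [Fintype.prod_prod_type (f := fun p : Fin k × Fin k => if p.1 < p.2 then f p.1 p.2 else 1)]
  rw [Finset.prod_comm]
  exact Finset.prod_congr rfl fun m _ => (Finset.prod_filter _ _).symm



/-!
STATEMENT 17: For a homogeneous polynomial `Q` on `ℂᵏ` and distinct `λ₁,…,λ_n` (`k ≤ n`),
the Atiyah–Bott fixed point sum over ordered `k`-element subsets `σ` of `{1,…,n}`
of `Q(λ_{σ(1)},…,λ_{σ(k)}) / ∏_{m=1}^k ∏_{i=m+1}^n (λ_{σ(i)} − λ_{σ(m)})` equals the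
iterated residue at infinity
`Res_{𝐳=∞} ∏_{m<l}(z_m−z_l) Q(𝐳) d𝐳 / ∏_{l=1}^k ∏_{i=1}^n (λ_i − z_l)`,
with the orientation convention `Res_{𝐳=∞} d𝐳/(z₁⋯z_k) = (−1)^k`.
-/
theorem fixed_point_sum_eq_iterated_residue (k n : ℕ) (hkn : k ≤ n)
    (lam : Fin n → ℂ) (hlam : Function.Injective lam)
    (Q : MvPolynomial (Fin k) ℂ) (d : ℕ) (hQ : Q.IsHomogeneous d) :
    ∃ F : ℝ → ℝ, ∀ R : Fin k → ℝ, AdmRadii k F R →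
      (∑ σ : Fin k ↪ Fin n,
          MvPolynomial.eval (fun i => lam (σ i)) Q /
            ∏ m : Fin k,
              ((∏ i ∈ Finset.univ.filter (fun i : Fin k => m < i),
                  (lam (σ i) - lam (σ m))) *
                ∏ j ∈ Finset.univ.filter (fun j : Fin n => ∀ i, σ i ≠ j),
                  (lam j - lam (σ m))))
        = (-1 : ℂ) ^ k * (1 / (2 * (Real.pi : ℂ) * Complex.I)) ^ k *
            itCircleIntegral k
              (fun z =>
                ((∏ p ∈ Finset.univ.filter
                      (fun p : Fin k × Fin k => p.1 < p.2), (z p.1 - z p.2)) *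
                    MvPolynomial.eval z Q) /
                  ∏ l : Fin k, ∏ i : Fin n, (lam i - z l)) R := by

  set M : ℝ := ∑ i, ‖lam i‖ with hM
  have hMle : ∀ i, ‖lam i‖ ≤ M :=
    fun i => Finset.single_le_sum (f := fun j => ‖lam j‖)
      (fun j _ => norm_nonneg _) (Finset.mem_univ i)
  refine ⟨fun t => max (max t M) 1, ?_⟩
  intro R hAdm
  have hRM : ∀ l : Fin k, M < R l ∧ 1 < R l := by
    rintro ⟨j, hj⟩
    cases j with
    | zero =>
      have h := hAdm.1 hj
      exact ⟨lt_of_le_of_lt (le_trans (le_max_right 1 M) (le_max_left _ 1)) h,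
        lt_of_le_of_lt (le_max_right _ 1) h⟩
    | succ m =>
      have hm : m < k := by omega
      have h := hAdm.2 ⟨m, hm⟩ hj
      exact ⟨lt_of_le_of_lt (le_trans (le_max_right _ M) (le_max_left _ 1)) h,
        lt_of_le_of_lt (le_max_right _ 1) h⟩
  have hR0 : ∀ l, 0 < R l := fun l => lt_trans zero_lt_one (hRM l).2
  have hlt : ∀ (l : Fin k) (i : Fin n), ‖lam i‖ < R l :=
    fun l i => lt_of_le_of_lt (hMle i) (hRM l).1
  set N' : MvPolynomial (Fin k) ℂ :=
    (∏ p ∈ Finset.univ.filter (fun p : Fin k × Fin k => p.1 < p.2),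
      (MvPolynomial.X p.1 - MvPolynomial.X p.2)) * Q with hN'
  have hNeval : ∀ z : Fin k → ℂ, MvPolynomial.eval z N' =
      (∏ p ∈ Finset.univ.filter (fun p : Fin k × Fin k => p.1 < p.2), (z p.1 - z p.2)) *
        MvPolynomial.eval z Q := by
    intro z
    rw [hN', map_mul]
    congr 1
    rw [map_prod]
    exact Finset.prod_congr rfl fun p _ => by simp
  -- rewrite the integrand as a finite sum of separated functions
  have hfun : (fun z : Fin k → ℂ =>
      ((∏ p ∈ Finset.univ.filter (fun p : Fin k × Fin k => p.1 < p.2), (z p.1 - z p.2)) *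
        MvPolynomial.eval z Q) / ∏ l : Fin k, ∏ i : Fin n, (lam i - z l))
      = fun z => ∑ s ∈ N'.support, MvPolynomial.coeff s N' *
          ∏ l, ((z l) ^ (s l) * (∏ i, (lam i - z l))⁻¹) := by
    funext z
    rw [← hNeval z, MvPolynomial.eval_eq', div_eq_mul_inv, Finset.sum_mul]
    refine Finset.sum_congr rfl fun s _ => ?_
    rw [← Finset.prod_inv_distrib, mul_assoc, ← Finset.prod_mul_distrib]
  rw [hfun]
  have hcont : ∀ s ∈ N'.support, ∀ l : Fin k,
      ContinuousOn (fun w : ℂ => w ^ (s l) * (∏ i, (lam i - w))⁻¹)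
        (Metric.sphere (0 : ℂ) (R l)) := by
    intro s _ l
    refine ((continuous_pow _).continuousOn).mul (ContinuousOn.inv₀
      ((continuous_finset_prod Finset.univ fun i _ =>
        continuous_const.sub continuous_id).continuousOn) fun w hw => ?_)
    rw [Finset.prod_ne_zero_iff]
    intro i _
    refine sub_ne_zero.2 fun h => ?_
    rw [mem_sphere_zero_iff_norm, ← h] at hw
    exact absurd (by simpa using hw) (ne_of_lt (hlt l i))
  rw [itCI_sum_sep N'.support k (fun s => MvPolynomial.coeff s N')
    (fun s l w => w ^ (s l) * (∏ i, (lam i - w))⁻¹) R hR0 hcont]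
  -- compute each single-variable integral
  set B : ℕ → ℂ := fun m =>
    ∑ i, lam i ^ m * (∏ j ∈ Finset.univ.erase i, (lam j - lam i))⁻¹ with hB
  have hint : ∀ (m : ℕ) (l : Fin k),
      (∮ z in C((0 : ℂ), R l), z ^ m * (∏ i, (lam i - z))⁻¹)
        = (-(2 * (Real.pi : ℂ) * Complex.I)) * B m := by
    intro m l
    have h := single_integral lam hlam (Polynomial.X ^ m) (hR0 l) (hlt l)
    simp only [Polynomial.eval_pow, Polynomial.eval_X] at h
    rw [h, hB]
  have hintegrals : ∀ s : Fin k →₀ ℕ,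
      (∏ l : Fin k, ∮ z in C((0 : ℂ), R l), z ^ (s l) * (∏ i, (lam i - z))⁻¹)
        = (-(2 * (Real.pi : ℂ) * Complex.I)) ^ k * ∏ l, B (s l) := by
    intro s
    rw [Finset.prod_congr rfl fun l _ => hint (s l) l, Finset.prod_mul_distrib,
      Finset.prod_const, Finset.card_univ, Fintype.card_fin]
  have hx : (2 * (Real.pi : ℂ) * Complex.I) ≠ 0 := by
    simp [Real.pi_ne_zero, Complex.I_ne_zero]
  have hconst : (-1 : ℂ) ^ k * (1 / (2 * (Real.pi : ℂ) * Complex.I)) ^ k *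
      (-(2 * (Real.pi : ℂ) * Complex.I)) ^ k = 1 := by
    rw [← mul_pow, ← mul_pow]
    rw [show (-1 : ℂ) * (1 / (2 * (Real.pi : ℂ) * Complex.I)) *
      (-(2 * (Real.pi : ℂ) * Complex.I)) = 1 by field_simp]
    exact one_pow k
  have hRHS : (-1 : ℂ) ^ k * (1 / (2 * (Real.pi : ℂ) * Complex.I)) ^ k *
      (∑ s ∈ N'.support, MvPolynomial.coeff s N' *
        ∏ l : Fin k, ∮ z in C((0 : ℂ), R l), z ^ (s l) * (∏ i, (lam i - z))⁻¹)
      = ∑ s ∈ N'.support, MvPolynomial.coeff s N' * ∏ l, B (s l) := by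
    rw [Finset.sum_congr rfl fun s _ => by rw [hintegrals s]]
    rw [Finset.mul_sum]
    refine Finset.sum_congr rfl fun s _ => ?_
    calc (-1 : ℂ) ^ k * (1 / (2 * (Real.pi : ℂ) * Complex.I)) ^ k *
          (MvPolynomial.coeff s N' * ((-(2 * (Real.pi : ℂ) * Complex.I)) ^ k * ∏ l, B (s l)))
        = ((-1 : ℂ) ^ k * (1 / (2 * (Real.pi : ℂ) * Complex.I)) ^ k *
            (-(2 * (Real.pi : ℂ) * Complex.I)) ^ k) *
          (MvPolynomial.coeff s N' * ∏ l, B (s l)) := by ring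
    _ = _ := by rw [hconst, one_mul]
  rw [hRHS]
  -- expand the product of sums
  have hexp : ∀ s : Fin k →₀ ℕ, (∏ l, B (s l))
      = ∑ t : Fin k → Fin n, ∏ l,
          (lam (t l) ^ (s l) * (∏ j ∈ Finset.univ.erase (t l), (lam j - lam (t l)))⁻¹) := by
    intro s
    rw [hB]
    rw [Finset.prod_univ_sum (fun _ : Fin k => (Finset.univ : Finset (Fin n)))
      (fun l j => lam j ^ (s l) * (∏ j' ∈ Finset.univ.erase j, (lam j' - lam j))⁻¹)]
    rw [Fintype.piFinset_univ]
  have hswap : (∑ s ∈ N'.support, MvPolynomial.coeff s N' * ∏ l, B (s l))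
      = ∑ t : Fin k → Fin n, MvPolynomial.eval (fun l => lam (t l)) N' *
          ∏ l, (∏ j ∈ Finset.univ.erase (t l), (lam j - lam (t l)))⁻¹ := by
    rw [Finset.sum_congr rfl fun s _ => by rw [hexp s, Finset.mul_sum]]
    rw [Finset.sum_comm]
    refine Finset.sum_congr rfl fun t _ => ?_
    rw [MvPolynomial.eval_eq', Finset.sum_mul]
    refine Finset.sum_congr rfl fun s _ => ?_
    rw [Finset.prod_mul_distrib]
    ring
  rw [hswap]
  -- kill non-injective terms
  have hzero : ∀ t : Fin k → Fin n, ¬ Function.Injective t →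
      MvPolynomial.eval (fun l => lam (t l)) N' = 0 := by
    intro t ht
    rw [hNeval]
    have : ∃ a b : Fin k, t a = t b ∧ a ≠ b := by
      by_contra h
      push_neg at h
      exact ht fun a b hab => by_contra fun hne => (hne (h a b hab))
    obtain ⟨a, b, hab, hne⟩ := this
    rcases lt_or_gt_of_ne hne with h1 | h1
    · rw [Finset.prod_eq_zero (i := (a, b))
        (Finset.mem_filter.2 ⟨Finset.mem_univ _, h1⟩) (by simp [hab]), zero_mul]
    · rw [Finset.prod_eq_zero (i := (b, a))
        (Finset.mem_filter.2 ⟨Finset.mem_univ _, h1⟩) (by simp [hab]), zero_mul]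
  rw [← Finset.sum_filter_of_ne (p := fun t : Fin k → Fin n => Function.Injective t)
    (fun t _ h => by
      by_contra hinj
      exact h (by rw [hzero t hinj, zero_mul]))]
  -- sum over embeddings
  rw [show (∑ t ∈ Finset.univ.filter (fun t : Fin k → Fin n => Function.Injective t),
        MvPolynomial.eval (fun l => lam (t l)) N' *
          ∏ l, (∏ j ∈ Finset.univ.erase (t l), (lam j - lam (t l)))⁻¹)
      = ∑ σ : Fin k ↪ Fin n,
          MvPolynomial.eval (fun l => lam (σ l)) N' *
            ∏ l, (∏ j ∈ Finset.univ.erase (σ l), (lam j - lam (σ l)))⁻¹ from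
    Finset.sum_bij' (fun t ht => (⟨t, (Finset.mem_filter.1 ht).2⟩ : Fin k ↪ Fin n))
      (fun σ _ => ⇑σ)
      (fun t ht => Finset.mem_univ _)
      (fun σ _ => Finset.mem_filter.2 ⟨Finset.mem_univ _, σ.injective⟩)
      (fun t ht => rfl)
      (fun σ _ => by ext l; rfl)
      (fun t ht => rfl)]
  -- per-embedding identity
  refine Finset.sum_congr rfl fun σ _ => ?_
  set V : ℂ := ∏ p ∈ Finset.univ.filter (fun p : Fin k × Fin k => p.1 < p.2),
    (lam (σ p.1) - lam (σ p.2)) with hV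
  have hVne : V ≠ 0 := by
    rw [hV, Finset.prod_ne_zero_iff]
    intro p hp
    exact sub_ne_zero.2 fun h =>
      (ne_of_lt (Finset.mem_filter.1 hp).2) (σ.injective (hlam h))
  have hsplit : ∀ m : Fin k, (∏ j ∈ Finset.univ.erase (σ m), (lam j - lam (σ m)))
      = (∏ i ∈ Finset.univ.erase m, (lam (σ i) - lam (σ m))) *
        ∏ j ∈ Finset.univ.filter (fun j : Fin n => ∀ i, σ i ≠ j), (lam j - lam (σ m)) := by
    intro m
    have hset : (Finset.univ.erase (σ m))
        = ((Finset.univ.erase m).image σ) ∪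
          Finset.univ.filter (fun j : Fin n => ∀ i, σ i ≠ j) := by
      ext j
      constructor
      · intro hj
        have hj1 : j ≠ σ m := (Finset.mem_erase.1 hj).1
        by_cases h : ∃ i, σ i = j
        · obtain ⟨i, hi⟩ := h
          exact Finset.mem_union_left _ (Finset.mem_image.2 ⟨i,
            Finset.mem_erase.2 ⟨fun him => hj1 (by rw [← hi, him]), Finset.mem_univ i⟩, hi⟩)
        · push_neg at h
          exact Finset.mem_union_right _ (Finset.mem_filter.2 ⟨Finset.mem_univ _, h⟩)
      · intro hj
        rcases Finset.mem_union.1 hj with h | h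
        · obtain ⟨i, hi, rfl⟩ := Finset.mem_image.1 h
          exact Finset.mem_erase.2 ⟨fun he => (Finset.mem_erase.1 hi).1 (σ.injective he),
            Finset.mem_univ _⟩
        · exact Finset.mem_erase.2 ⟨fun he => (Finset.mem_filter.1 h).2 m he.symm,
            Finset.mem_univ _⟩
    have hdisj : Disjoint ((Finset.univ.erase m).image σ)
        (Finset.univ.filter (fun j : Fin n => ∀ i, σ i ≠ j)) := by
      rw [Finset.disjoint_left]
      rintro j hj1 hj2
      obtain ⟨i, _, rfl⟩ := Finset.mem_image.1 hj1
      exact (Finset.mem_filter.1 hj2).2 i rfl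
    rw [hset, Finset.prod_union hdisj,
      Finset.prod_image (fun a _ b _ h => σ.injective h)]
  have herase : ∀ m : Fin k, (∏ i ∈ Finset.univ.erase m, (lam (σ i) - lam (σ m)))
      = (∏ i ∈ Finset.univ.filter (fun i : Fin k => m < i), (lam (σ i) - lam (σ m))) *
        ∏ i ∈ Finset.univ.filter (fun i : Fin k => i < m), (lam (σ i) - lam (σ m)) := by
    intro m
    have hset2 : (Finset.univ.erase m : Finset (Fin k))
        = Finset.univ.filter (fun i => m < i) ∪ Finset.univ.filter (fun i => i < m) := by
      ext i
      constructor
      · intro h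
        rcases lt_or_gt_of_ne (Finset.mem_erase.1 h).1 with h1 | h1
        · exact Finset.mem_union_right _ (Finset.mem_filter.2 ⟨Finset.mem_univ _, h1⟩)
        · exact Finset.mem_union_left _ (Finset.mem_filter.2 ⟨Finset.mem_univ _, h1⟩)
      · intro h
        rcases Finset.mem_union.1 h with h1 | h1
        · exact Finset.mem_erase.2 ⟨ne_of_gt (Finset.mem_filter.1 h1).2, Finset.mem_univ _⟩
        · exact Finset.mem_erase.2 ⟨ne_of_lt (Finset.mem_filter.1 h1).2, Finset.mem_univ _⟩
    have hdisj2 : Disjoint (Finset.univ.filter (fun i : Fin k => m < i))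
        (Finset.univ.filter (fun i : Fin k => i < m)) := by
      rw [Finset.disjoint_left]
      intro i h1 h2
      exact absurd ((Finset.mem_filter.1 h2).2) (not_lt_of_gt (Finset.mem_filter.1 h1).2)
    rw [hset2, Finset.prod_union hdisj2]
  have hVfact : (∏ m : Fin k, ∏ i ∈ Finset.univ.filter (fun i : Fin k => i < m),
      (lam (σ i) - lam (σ m))) = V := by
    rw [hV]
    exact (pair_prod k (fun a b => lam (σ a) - lam (σ b))).symm
  have hEprod : (∏ m : Fin k, ∏ j ∈ Finset.univ.erase (σ m), (lam j - lam (σ m)))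
      = V * ∏ m : Fin k,
          ((∏ i ∈ Finset.univ.filter (fun i : Fin k => m < i), (lam (σ i) - lam (σ m))) *
            ∏ j ∈ Finset.univ.filter (fun j : Fin n => ∀ i, σ i ≠ j), (lam j - lam (σ m))) := by
    rw [Finset.prod_congr rfl fun m _ => by rw [hsplit m, herase m]]
    rw [Finset.prod_congr rfl fun m _ => show
      ((∏ i ∈ Finset.univ.filter (fun i : Fin k => m < i), (lam (σ i) - lam (σ m))) *
        ∏ i ∈ Finset.univ.filter (fun i : Fin k => i < m), (lam (σ i) - lam (σ m))) *
        ∏ j ∈ Finset.univ.filter (fun j : Fin n => ∀ i, σ i ≠ j), (lam j - lam (σ m))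
      = (∏ i ∈ Finset.univ.filter (fun i : Fin k => i < m), (lam (σ i) - lam (σ m))) *
        ((∏ i ∈ Finset.univ.filter (fun i : Fin k => m < i), (lam (σ i) - lam (σ m))) *
          ∏ j ∈ Finset.univ.filter (fun j : Fin n => ∀ i, σ i ≠ j), (lam j - lam (σ m)))
      from by ring]
    rw [Finset.prod_mul_distrib, hVfact]
  rw [hNeval]
  rw [Finset.prod_inv_distrib, hEprod]
  rw [← hV]
  exact cancel_aux _ _ _ hVne


end
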